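/- Let H be an abelian group with automorphism t and let k_1, k_2 be coprime positive integers. For z_1, z_2 ∈ S^1 and characters χ_1, χ_2: H → S^1 factoring through H/(t^{k_1}-1)H and H/(t^{k_2}-1)H respectively, the tensor product of the representations α_{(k_1,z_1,χ_1)} and α_{(k_2,z_2,χ_2)} of Z ⋉ H is unitarily equivalent to α_{(k_1 k_2, z_1 z_2, χ_1 χ_2)}. -/

import Mathlib

open Matrix Kronecker

/-- The `k×k` cyclic permutation matrix raised to the `n`-th power (entries indexed by `ZMod k`). -/
def cycS (k : ℕ) [NeZero k] (n : ℤ) : Matrix (ZMod k) (ZMod k) ℂ :=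
  Matrix.of fun i j => if i = j + (n : ZMod k) then 1 else 0

/-- The metabelian representation `α_{(k,z,χ)} : (n, h) ↦ zⁿ Sⁿ diag(χ(h), χ(th), …, χ(t^{k-1}h))`. -/
noncomputable def alphaMat {H : Type*} [AddCommGroup H] (k : ℕ) [NeZero k] (t : AddAut H)
    (z : ℂ) (χ : H → ℂ) (n : ℤ) (h : H) : Matrix (ZMod k) (ZMod k) ℂ :=
  z ^ n • (cycS k n * Matrix.diagonal fun i : ZMod k => χ ((i.val • t) h))

lemma alphaMat_apply {H : Type*} [AddCommGroup H] (k : ℕ) [NeZero k] (t : AddAut H)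
    (z : ℂ) (χ : H → ℂ) (n : ℤ) (h : H) (i j : ZMod k) :
    alphaMat k t z χ n h i j
      = z ^ n * ((if i = j + (n : ZMod k) then 1 else 0) * χ ((j.val • t) h)) := by
  simp [alphaMat, cycS, Matrix.mul_diagonal]

lemma chi_period {H : Type*} [AddCommGroup H] (k : ℕ) (t : AddAut H) (χ : H → ℂ)
    (hfac : ∀ a : H, χ ((k • t) a) = χ a) (c j : ℕ) (a : H) :
    χ (((j + c * k) • t) a) = χ ((j • t) a) := by
  induction c with
  | zero => simp
  | succ c ih =>
    have : j + (c + 1) * k = k + (j + c * k) := by ring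
    rw [this, add_nsmul, AddAut.add_apply, hfac, ih]

lemma chi_mod {H : Type*} [AddCommGroup H] (k : ℕ) (t : AddAut H) (χ : H → ℂ)
    (hfac : ∀ a : H, χ ((k • t) a) = χ a) (j : ℕ) (a : H) :
    χ (((j % k) • t) a) = χ ((j • t) a) := by
  conv_rhs => rw [show j = j % k + (j / k) * k from (Nat.mod_add_div' j k).symm]
  rw [chi_period k t χ hfac]

/-- For coprime `k₁, k₂` the tensor (Kronecker) product of `α_{(k₁,z₁,χ₁)}` and `α_{(k₂,z₂,χ₂)}`
is unitarily equivalent to `α_{(k₁k₂, z₁z₂, χ₁χ₂)}`. -/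
theorem alphaMat_tensor {H : Type*} [AddCommGroup H] (k₁ k₂ : ℕ) [NeZero k₁] [NeZero k₂]
    (hco : Nat.Coprime k₁ k₂) (t : AddAut H) (z₁ z₂ : ℂ)
    (hz₁ : ‖z₁‖ = 1) (hz₂ : ‖z₂‖ = 1) (χ₁ χ₂ : H → ℂ)
    (hχ₁mul : ∀ a b : H, χ₁ (a + b) = χ₁ a * χ₁ b)
    (hχ₂mul : ∀ a b : H, χ₂ (a + b) = χ₂ a * χ₂ b)
    (hχ₁norm : ∀ a : H, ‖χ₁ a‖ = 1) (hχ₂norm : ∀ a : H, ‖χ₂ a‖ = 1)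
    (hχ₁fac : ∀ a : H, χ₁ ((k₁ • t) a) = χ₁ a)
    (hχ₂fac : ∀ a : H, χ₂ ((k₂ • t) a) = χ₂ a) :
    ∃ U : Matrix (ZMod k₁ × ZMod k₂) (ZMod (k₁ * k₂)) ℂ,
      U * Uᴴ = 1 ∧ Uᴴ * U = 1 ∧
      ∀ (n : ℤ) (a : H),
        (alphaMat k₁ t z₁ χ₁ n a) ⊗ₖ (alphaMat k₂ t z₂ χ₂ n a) =
          U * alphaMat (k₁ * k₂) t (z₁ * z₂) (fun b => χ₁ b * χ₂ b) n a * Uᴴ := by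
  haveI : NeZero (k₁ * k₂) := ⟨mul_ne_zero (NeZero.ne k₁) (NeZero.ne k₂)⟩
  set e := ZMod.chineseRemainder hco with he
  set f : (ZMod k₁ × ZMod k₂) ≃ ZMod (k₁ * k₂) := e.toEquiv.symm with hf
  refine ⟨(1 : Matrix (ZMod (k₁ * k₂)) (ZMod (k₁ * k₂)) ℂ).submatrix f id, ?_, ?_, ?_⟩
  · have := Matrix.submatrix_mul_equiv
      (1 : Matrix (ZMod (k₁ * k₂)) (ZMod (k₁ * k₂)) ℂ) 1 f (Equiv.refl _) f
    simp only [Matrix.conjTranspose_submatrix, Matrix.conjTranspose_one] at *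
    simpa using this
  · have := Matrix.submatrix_mul_equiv
      (1 : Matrix (ZMod (k₁ * k₂)) (ZMod (k₁ * k₂)) ℂ) 1 (id : ZMod (k₁*k₂) → _) f
      (id : ZMod (k₁*k₂) → _)
    simp only [Matrix.conjTranspose_submatrix, Matrix.conjTranspose_one] at *
    simpa using this
  · intro n a
    set A := alphaMat (k₁ * k₂) t (z₁ * z₂) (fun b => χ₁ b * χ₂ b) n a with hA
    have h1 : (1 : Matrix (ZMod (k₁ * k₂)) (ZMod (k₁ * k₂)) ℂ).submatrix f id * A
        = A.submatrix f id := by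
      have := Matrix.submatrix_mul_equiv
        (1 : Matrix (ZMod (k₁ * k₂)) (ZMod (k₁ * k₂)) ℂ) A f (Equiv.refl _)
        (id : ZMod (k₁*k₂) → _)
      simpa using this
    have h2 : A.submatrix f id *
        ((1 : Matrix (ZMod (k₁ * k₂)) (ZMod (k₁ * k₂)) ℂ).submatrix f id)ᴴ
        = A.submatrix f f := by
      simp only [Matrix.conjTranspose_submatrix, Matrix.conjTranspose_one]
      have := Matrix.submatrix_mul_equiv A
        (1 : Matrix (ZMod (k₁ * k₂)) (ZMod (k₁ * k₂)) ℂ) f (Equiv.refl _) f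
      simpa using this
    rw [h1, h2]
    ext ⟨p₁, p₂⟩ ⟨q₁, q₂⟩
    rw [Matrix.kroneckerMap_apply, Matrix.submatrix_apply]
    set m := f (p₁, p₂) with hm
    set m' := f (q₁, q₂) with hm'
    have hep : e m = (p₁, p₂) := e.toEquiv.apply_symm_apply _
    have heq : e m' = (q₁, q₂) := e.toEquiv.apply_symm_apply _
    have hcast : ∀ (x : ZMod (k₁ * k₂)), e x = ((x.val : ZMod k₁), (x.val : ZMod k₂)) := by
      intro x
      have : e x = ZMod.castHom (show Nat.lcm k₁ k₂ ∣ k₁ * k₂ by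
        simp [Nat.lcm_dvd_iff]) (ZMod k₁ × ZMod k₂) x := rfl
      rw [this, ZMod.castHom_apply]
      ext
      · rw [Prod.fst_zmod_cast, ← ZMod.natCast_val]
      · rw [Prod.snd_zmod_cast, ← ZMod.natCast_val]
    have hpm := hcast m; rw [hep] at hpm
    have hqm := hcast m'; rw [heq] at hqm
    have hp₁ : p₁ = (m.val : ZMod k₁) := (Prod.ext_iff.mp hpm).1
    have hp₂ : p₂ = (m.val : ZMod k₂) := (Prod.ext_iff.mp hpm).2
    have hq₁ : q₁ = (m'.val : ZMod k₁) := (Prod.ext_iff.mp hqm).1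
    have hq₂ : q₂ = (m'.val : ZMod k₂) := (Prod.ext_iff.mp hqm).2
    -- the shift conditions correspond
    have hcond : (m = m' + (n : ZMod (k₁ * k₂)))
        ↔ (p₁ = q₁ + (n : ZMod k₁) ∧ p₂ = q₂ + (n : ZMod k₂)) := by
      rw [← e.injective.eq_iff, map_add, hep, heq, map_intCast, Prod.ext_iff]
      simp [Prod.fst_intCast, Prod.snd_intCast]
    -- character values correspond
    have hv₁ : χ₁ ((q₁.val • t) a) = χ₁ ((m'.val • t) a) := by
      rw [hq₁, ZMod.val_natCast, chi_mod k₁ t χ₁ hχ₁fac]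
    have hv₂ : χ₂ ((q₂.val • t) a) = χ₂ ((m'.val • t) a) := by
      rw [hq₂, ZMod.val_natCast, chi_mod k₂ t χ₂ hχ₂fac]
    rw [alphaMat_apply, alphaMat_apply, hA, alphaMat_apply, hv₁, hv₂, mul_zpow]
    by_cases hc : m = m' + (n : ZMod (k₁ * k₂))
    · obtain ⟨hc₁, hc₂⟩ := hcond.mp hc
      rw [if_pos hc, if_pos hc₁, if_pos hc₂]
      ring
    · have := hcond.not.mp hc
      rw [if_neg hc]
      rcases not_and_or.mp this with h | h
      · rw [if_neg h]; ring
      · rw [if_neg h]; ring
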